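/- Let p be a prime and m < m' < n < n' integers. Every matrix γ ∈ SL₂(ℚ_p) whose entries satisfy a,d ∈ ℤ_p, b ∈ p^{-m'}ℤ_p, c ∈ p^nℤ_p factors as γ = γ₁γ₂ with γ₁ ∈ SL₂(ℚ_p) having a₁,d₁ ∈ ℤ_p, b₁ ∈ p^{-m}ℤ_p, c₁ ∈ p^nℤ_p, and γ₂ ∈ SL₂(ℚ_p) having a₂,d₂ ∈ ℤ_p, b₂ ∈ p^{-m'}ℤ_p, c₂ ∈ p^{n'}ℤ_p. -/

import Mathlib

open Matrix

/-- K_{m..n}·K_{m'..n'} ⊇ K_{m'..n} for m < m' < n < n': every γ ∈ SL₂(ℚ_p) with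
a,d ∈ ℤ_p, b ∈ p^{-m'}ℤ_p, c ∈ p^{n}ℤ_p factors as γ₁γ₂ with γ₁ ∈ K_{m..n} and
γ₂ ∈ K_{m'..n'}.  Membership x ∈ p^{-k}ℤ_p is expressed as ‖p^k · x‖ ≤ 1. -/
theorem stmt_5 (p : ℕ) [Fact p.Prime] (m m' n n' : ℤ)
    (h1 : m < m') (h2 : m' < n) (h3 : n < n')
    (γ : SpecialLinearGroup (Fin 2) ℚ_[p])
    (ha : ‖(γ : Matrix (Fin 2) (Fin 2) ℚ_[p]) 0 0‖ ≤ 1)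
    (hd : ‖(γ : Matrix (Fin 2) (Fin 2) ℚ_[p]) 1 1‖ ≤ 1)
    (hb : ‖(p : ℚ_[p]) ^ m' * (γ : Matrix (Fin 2) (Fin 2) ℚ_[p]) 0 1‖ ≤ 1)
    (hc : ‖(p : ℚ_[p]) ^ (-n) * (γ : Matrix (Fin 2) (Fin 2) ℚ_[p]) 1 0‖ ≤ 1) :
    ∃ γ₁ γ₂ : SpecialLinearGroup (Fin 2) ℚ_[p],
      γ = γ₁ * γ₂ ∧
      ‖(γ₁ : Matrix (Fin 2) (Fin 2) ℚ_[p]) 0 0‖ ≤ 1 ∧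
      ‖(γ₁ : Matrix (Fin 2) (Fin 2) ℚ_[p]) 1 1‖ ≤ 1 ∧
      ‖(p : ℚ_[p]) ^ m * (γ₁ : Matrix (Fin 2) (Fin 2) ℚ_[p]) 0 1‖ ≤ 1 ∧
      ‖(p : ℚ_[p]) ^ (-n) * (γ₁ : Matrix (Fin 2) (Fin 2) ℚ_[p]) 1 0‖ ≤ 1 ∧
      ‖(γ₂ : Matrix (Fin 2) (Fin 2) ℚ_[p]) 0 0‖ ≤ 1 ∧
      ‖(γ₂ : Matrix (Fin 2) (Fin 2) ℚ_[p]) 1 1‖ ≤ 1 ∧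
      ‖(p : ℚ_[p]) ^ m' * (γ₂ : Matrix (Fin 2) (Fin 2) ℚ_[p]) 0 1‖ ≤ 1 ∧
      ‖(p : ℚ_[p]) ^ (-n') * (γ₂ : Matrix (Fin 2) (Fin 2) ℚ_[p]) 1 0‖ ≤ 1 := by
  set a := (γ : Matrix (Fin 2) (Fin 2) ℚ_[p]) 0 0 with ha'
  set b := (γ : Matrix (Fin 2) (Fin 2) ℚ_[p]) 0 1 with hb'
  set c := (γ : Matrix (Fin 2) (Fin 2) ℚ_[p]) 1 0 with hc'
  set d := (γ : Matrix (Fin 2) (Fin 2) ℚ_[p]) 1 1 with hd'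
  have hdet : a * d - b * c = 1 := by
    have := γ.property
    rw [Matrix.det_fin_two] at this
    exact this
  have hp1 : (1:ℝ) < p := by exact_mod_cast (Fact.out : p.Prime).one_lt
  have hp0 : (0:ℝ) < p := lt_trans one_pos hp1
  have hppos : (p:ℚ_[p]) ≠ 0 := by
    exact_mod_cast (Fact.out : p.Prime).ne_zero
  -- ‖b*c‖ < 1
  have hbc : ‖b * c‖ < 1 := by
    have key : b * c = ((p:ℚ_[p]) ^ m' * b) * ((p:ℚ_[p]) ^ (-n) * c) * (p:ℚ_[p]) ^ (n - m') := by
      rw [show (p:ℚ_[p]) ^ (n - m') = (p:ℚ_[p]) ^ n * ((p:ℚ_[p]) ^ m')⁻¹ by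
        rw [zpow_sub₀ hppos]; ring]
      field_simp [zpow_ne_zero, hppos]
      rw [mul_assoc (b * c), ← zpow_add₀ hppos, neg_add_cancel, zpow_zero, mul_one]
    rw [key, norm_mul]
    have hnp : ‖(p:ℚ_[p]) ^ (n - m')‖ < 1 := by
      rw [Padic.norm_p_zpow]
      apply zpow_lt_one_of_neg₀ hp1
      omega
    calc ‖(p:ℚ_[p]) ^ m' * b * ((p:ℚ_[p]) ^ (-n) * c)‖ * ‖(p:ℚ_[p]) ^ (n - m')‖
        ≤ 1 * ‖(p:ℚ_[p]) ^ (n - m')‖ := by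
          apply mul_le_mul_of_nonneg_right _ (norm_nonneg _)
          rw [norm_mul]
          exact mul_le_one₀ hb (norm_nonneg _) hc
      _ = ‖(p:ℚ_[p]) ^ (n - m')‖ := one_mul _
      _ < 1 := hnp
  -- ‖a‖ = 1
  have had : (1:ℝ) ≤ ‖a * d‖ := by
    have h1' : (1:ℝ) = ‖a * d - b * c‖ := by rw [hdet, norm_one]
    have hle := Padic.nonarchimedean (a * d) (-(b * c))
    rw [← sub_eq_add_neg, norm_neg] at hle
    rcases le_max_iff.mp (le_of_eq_of_le h1' hle) with h | h
    · exact h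
    · linarith
  have hna : ‖a‖ = 1 := by
    rw [norm_mul] at had
    have := mul_le_one₀ ha (norm_nonneg d) hd
    nlinarith [norm_nonneg a, norm_nonneg d]
  have ha0 : a ≠ 0 := by
    intro h; rw [h, norm_zero] at hna; norm_num at hna
  have hnai : ‖a⁻¹‖ = 1 := by rw [norm_inv, hna, inv_one]
  -- the two factors
  have det1 : (!![1, 0; c * a⁻¹, 1] : Matrix (Fin 2) (Fin 2) ℚ_[p]).det = 1 := by
    rw [Matrix.det_fin_two_of]; ring
  have det2 : (!![a, b; 0, a⁻¹] : Matrix (Fin 2) (Fin 2) ℚ_[p]).det = 1 := by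
    rw [Matrix.det_fin_two_of]; field_simp; ring
  have hγ : (γ : Matrix (Fin 2) (Fin 2) ℚ_[p]) = !![a, b; c, d] := by
    ext i j; fin_cases i <;> fin_cases j <;> rfl
  refine ⟨⟨!![1, 0; c * a⁻¹, 1], det1⟩, ⟨!![a, b; 0, a⁻¹], det2⟩, ?_, ?_, ?_, ?_, ?_, ?_, ?_, ?_, ?_⟩
  · apply Subtype.ext
    show (γ : Matrix (Fin 2) (Fin 2) ℚ_[p]) = !![1, 0; c * a⁻¹, 1] * !![a, b; 0, a⁻¹]
    rw [hγ]
    show !![a, b; c, d] = !![1, 0; c * a⁻¹, 1] * !![a, b; 0, a⁻¹]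
    rw [Matrix.mul_fin_two]
    ext i j
    fin_cases i <;> fin_cases j <;> simp <;> field_simp <;> linear_combination hdet
  · show ‖(1:ℚ_[p])‖ ≤ 1
    simp
  · show ‖(1:ℚ_[p])‖ ≤ 1
    simp
  · show ‖(p:ℚ_[p]) ^ m * (0:ℚ_[p])‖ ≤ 1
    simp
  · show ‖(p:ℚ_[p]) ^ (-n) * (c * a⁻¹)‖ ≤ 1
    rw [show (p:ℚ_[p]) ^ (-n) * (c * a⁻¹) = ((p:ℚ_[p]) ^ (-n) * c) * a⁻¹ by ring, norm_mul, hnai,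
      mul_one]
    exact hc
  · exact hna.le
  · exact hnai.le
  · exact hb
  · show ‖(p:ℚ_[p]) ^ (-n') * (0:ℚ_[p])‖ ≤ 1
    simp
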